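/- For every integer m ≥ 1 there exist a set V of 2^m distinct real numbers and pairwise disjoint symmetric relations E₁, …, E_m on V whose union is exactly the set of all pairs of distinct points of V, such that: (1) each E_i is of the form E_i = {(u,v) ∈ V × V : u ≠ v and a_i < |u − v| < b_i} for some reals 0 ≤ a_i < b_i (hence each E_i is a semi-algebraic relation on ℝ of complexity at most 4), and (2) for every integer p ≥ 2, every p-element subset S ⊆ V induces at least ⌈log p⌉ distinct relations, i.e., the number of indices i for which some pair of distinct points of S lies in E_i is at least ⌈log p⌉. Consequently, f_{1,4}(n, p, ⌈log p⌉) ≤ O(log n). (Here log denotes the logarithm in base 2.) -/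

import Mathlib

open scoped Classical

namespace LayeredConstruction

variable {m : ℕ}

/-- indices where two 0/1 vectors differ -/
noncomputable def diffs (c d : Fin m → Bool) : Finset (Fin m) :=
  Finset.univ.filter fun j => c j ≠ d j

lemma mem_diffs {c d : Fin m → Bool} {j : Fin m} : j ∈ diffs c d ↔ c j ≠ d j := by
  simp [diffs]

lemma diffs_nonempty {c d : Fin m → Bool} (h : c ≠ d) : (diffs c d).Nonempty := by
  by_contra hne
  apply h
  funext j
  by_contra hj
  exact hne ⟨j, mem_diffs.2 hj⟩

/-- top differing index -/
noncomputable def top (c d : Fin m → Bool) (h : c ≠ d) : Fin m :=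
  (diffs c d).max' (diffs_nonempty h)

lemma top_mem {c d : Fin m → Bool} (h : c ≠ d) : top c d h ∈ diffs c d :=
  (diffs c d).max'_mem _

lemma le_top {c d : Fin m → Bool} (h : c ≠ d) {j : Fin m} (hj : j ∈ diffs c d) :
    j ≤ top c d h :=
  (diffs c d).le_max' j hj

/-- real value of a 0/1 vector in base 4 -/
noncomputable def fval (c : Fin m → Bool) : ℝ :=
  ∑ j : Fin m, if c j then (4 : ℝ) ^ (j : ℕ) else 0

lemma geom_bound (N : ℕ) : ∑ n ∈ Finset.range N, (4 : ℝ) ^ n < (4 : ℝ) ^ N / 2 := by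
  have h4 : (4 : ℝ) ≠ 1 := by norm_num
  rw [geom_sum_eq h4]
  have h1 : (1 : ℝ) ≤ (4 : ℝ) ^ N := one_le_pow₀ (by norm_num)
  norm_num
  nlinarith

/-- key distance estimate -/
lemma dist_bound (c d : Fin m → Bool) (h : c ≠ d) :
    (4 : ℝ) ^ ((top c d h : Fin m) : ℕ) / 2 < |fval c - fval d| ∧
      |fval c - fval d| < 2 * (4 : ℝ) ^ ((top c d h : Fin m) : ℕ) := by
  set j := top c d h with hjdef
  set g : Fin m → ℝ :=
    fun k => (if c k then (4 : ℝ) ^ (k : ℕ) else 0) - (if d k then (4 : ℝ) ^ (k : ℕ) else 0)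
    with hg
  have hsum : fval c - fval d = ∑ k ∈ diffs c d, g k := by
    rw [fval, fval, ← Finset.sum_sub_distrib]
    exact (Finset.sum_subset (Finset.subset_univ _) (by
      intro x _ hx
      have : c x = d x := by
        by_contra hcx
        exact hx (mem_diffs.2 hcx)
      simp [hg, this])).symm
  have hsplit : ∑ k ∈ diffs c d, g k = g j + ∑ k ∈ (diffs c d).erase j, g k :=
    (Finset.add_sum_erase _ g (top_mem h)).symm
  have hgj : |g j| = (4 : ℝ) ^ (j : ℕ) := by
    have hne : c j ≠ d j := mem_diffs.1 (top_mem h)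
    have hpos : (0 : ℝ) < (4 : ℝ) ^ (j : ℕ) := by positivity
    cases hc : c j <;> cases hd : d j <;> simp [hc, hd] at hne ⊢ <;>
      simp [hg, hc, hd, abs_of_pos hpos, abs_of_neg (neg_neg_iff_pos.2 hpos)]
  set R := ∑ k ∈ (diffs c d).erase j, g k with hR
  have hRbound : |R| < (4 : ℝ) ^ (j : ℕ) / 2 := by
    have h1 : |R| ≤ ∑ k ∈ (diffs c d).erase j, |g k| := Finset.abs_sum_le_sum_abs _ _
    have h2 : ∑ k ∈ (diffs c d).erase j, |g k| ≤
        ∑ k ∈ (diffs c d).erase j, (4 : ℝ) ^ (k : ℕ) := by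
      apply Finset.sum_le_sum
      intro k _
      have hpos : (0 : ℝ) ≤ (4 : ℝ) ^ (k : ℕ) := by positivity
      cases hc : c k <;> cases hd : d k <;>
        simp [hg, hc, hd, abs_of_nonneg hpos, abs_of_nonpos (neg_nonpos.2 hpos)]
    have h3 : ∑ k ∈ (diffs c d).erase j, (4 : ℝ) ^ (k : ℕ) =
        ∑ n ∈ ((diffs c d).erase j).image (Fin.val), (4 : ℝ) ^ n := by
      rw [Finset.sum_image]
      intro a _ b _ hab
      exact Fin.val_injective hab
    have h4 : ((diffs c d).erase j).image (Fin.val) ⊆ Finset.range (j : ℕ) := by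
      intro n hn
      simp only [Finset.mem_image] at hn
      obtain ⟨k, hk, rfl⟩ := hn
      have hkj : k ≠ j := (Finset.mem_erase.1 hk).1
      have hle : k ≤ j := le_top h (Finset.mem_erase.1 hk).2
      have : k < j := lt_of_le_of_ne hle hkj
      exact Finset.mem_range.2 this
    have h5 : ∑ n ∈ ((diffs c d).erase j).image (Fin.val), (4 : ℝ) ^ n ≤
        ∑ n ∈ Finset.range (j : ℕ), (4 : ℝ) ^ n :=
      Finset.sum_le_sum_of_subset_of_nonneg h4 (fun n _ _ => by positivity)
    have h6 := geom_bound (j : ℕ)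
    linarith
  have htotal : fval c - fval d = g j + R := by rw [hsum, hsplit]
  have hp : (0:ℝ) < (4:ℝ) ^ ((j : Fin m) : ℕ) := by positivity
  constructor
  · have : |g j| - |(-R)| ≤ |g j - (-R)| := abs_sub_abs_le_abs_sub _ _
    rw [sub_neg_eq_add, abs_neg] at this
    rw [htotal]
    rw [hgj] at this
    linarith
  · have : |g j + R| ≤ |g j| + |R| := abs_add_le _ _
    rw [hgj] at this
    rw [htotal]
    linarith

lemma fval_injective : Function.Injective (fval (m := m)) := by
  intro c d hcd
  by_contra h
  have := (dist_bound c d h).1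
  rw [hcd] at this
  simp at this
  have : (0:ℝ) < (4 : ℝ) ^ ((top c d h : Fin m) : ℕ) := by positivity
  linarith

/-- counting lemma: if all top indices of pairs of `A` lie in `T` then `|A| ≤ 2^|T|` -/
lemma count_le : ∀ (n : ℕ) (T : Finset (Fin m)), T.card = n →
    ∀ A : Finset (Fin m → Bool),
      (∀ c ∈ A, ∀ d ∈ A, ∀ h : c ≠ d, top c d h ∈ T) → A.card ≤ 2 ^ T.card := by
  intro n
  induction n using Nat.strong_induction_on with
  | _ n IH =>
    intro T hT A hA
    by_cases hc1 : A.card ≤ 1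
    · exact le_trans hc1 Nat.one_le_two_pow
    push_neg at hc1
    obtain ⟨c, hc, d, hd, hcd⟩ := Finset.one_lt_card.1 hc1
    set U : Finset (Fin m) :=
      T.filter (fun i => ∃ c ∈ A, ∃ d ∈ A, ∃ h : c ≠ d, top c d h = i) with hU
    have hUne : U.Nonempty :=
      ⟨top c d hcd, Finset.mem_filter.2 ⟨hA c hc d hd hcd, c, hc, d, hd, hcd, rfl⟩⟩
    set i₀ := U.max' hUne with hi₀
    have hi₀U : i₀ ∈ U := U.max'_mem hUne
    have hi₀T : i₀ ∈ T := (Finset.mem_filter.1 hi₀U).1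
    set A1 : Finset (Fin m → Bool) := A.filter (fun c => c i₀ = true) with hA1
    set A0 : Finset (Fin m → Bool) := A.filter (fun c => ¬ c i₀ = true) with hA0
    have hcards : A1.card + A0.card = A.card :=
      Finset.card_filter_add_card_filter_not _
    have hTe : (T.erase i₀).card = T.card - 1 := Finset.card_erase_of_mem hi₀T
    have hTn : 1 ≤ T.card := Finset.card_pos.2 ⟨i₀, hi₀T⟩
    have hlt : (T.erase i₀).card < n := by omega
    have key : ∀ B : Finset (Fin m → Bool), (∀ c ∈ B, c ∈ A) →
        (∀ c ∈ B, ∀ d ∈ B, c i₀ = d i₀) → B.card ≤ 2 ^ (T.erase i₀).card := by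
      intro B hBA hBeq
      refine IH _ hlt _ rfl B ?_
      intro c hcB d hdB h
      refine Finset.mem_erase.2 ⟨?_, hA c (hBA c hcB) d (hBA d hdB) h⟩
      intro hcontra
      have := mem_diffs.1 (top_mem h)
      rw [hcontra] at this
      exact this (hBeq c hcB d hdB)
    have h1 : A1.card ≤ 2 ^ (T.erase i₀).card := by
      apply key
      · intro c hc; exact (Finset.mem_filter.1 hc).1
      · intro c hc d hd
        rw [(Finset.mem_filter.1 hc).2, (Finset.mem_filter.1 hd).2]
    have h0 : A0.card ≤ 2 ^ (T.erase i₀).card := by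
      apply key
      · intro c hc; exact (Finset.mem_filter.1 hc).1
      · intro c hc d hd
        have hc' := (Finset.mem_filter.1 hc).2
        have hd' := (Finset.mem_filter.1 hd).2
        simp only [Bool.not_eq_true] at hc' hd'
        rw [hc', hd']
    obtain ⟨k, hk⟩ : ∃ k, T.card = k + 1 := ⟨T.card - 1, by omega⟩
    have : (T.erase i₀).card = k := by omega
    rw [this] at h1 h0
    rw [hk, pow_succ]
    omega

end LayeredConstruction

open LayeredConstruction in
/-- Construction for the upper bound in Theorem 1.5: for every `m ≥ 1` there is a set
`V` of `2^m` reals and pairwise disjoint symmetric relations `E₁, …, E_m`, each of the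
form `E_i = {(u,v) : u ≠ v ∧ a_i < |u - v| < b_i}` with `0 ≤ a_i < b_i` (hence
semi-algebraic of complexity at most 4), whose union is exactly the pairs of distinct
points of `V`, such that every `p`-element subset of `V` (for any `p ≥ 2`) induces at
least `⌈log p⌉` distinct relations.  (Logs are base 2.) -/
theorem layered_coloring_construction (m : ℕ) (hm : 1 ≤ m) :
    ∃ (V : Finset ℝ) (a b : Fin m → ℝ),
      V.card = 2 ^ m ∧
      (∀ i, 0 ≤ a i ∧ a i < b i) ∧
      -- the relations are pairwise disjoint on `V`
      (∀ i j : Fin m, i ≠ j → ∀ u ∈ V, ∀ v ∈ V,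
        ¬((a i < |u - v| ∧ |u - v| < b i) ∧ (a j < |u - v| ∧ |u - v| < b j))) ∧
      -- their union covers all pairs of distinct points of `V`
      (∀ u ∈ V, ∀ v ∈ V, u ≠ v → ∃ i : Fin m, a i < |u - v| ∧ |u - v| < b i) ∧
      -- every `p`-element subset induces at least `⌈log p⌉` distinct relations
      (∀ p : ℕ, 2 ≤ p → ∀ S ⊆ V, S.card = p →
        Nat.clog 2 p ≤
          ((Finset.univ : Finset (Fin m)).filter fun i =>
            ∃ u ∈ S, ∃ v ∈ S, u ≠ v ∧ a i < |u - v| ∧ |u - v| < b i).card) := by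
  refine ⟨Finset.image (fval (m := m)) Finset.univ,
    fun i => (4 : ℝ) ^ (i : ℕ) / 2, fun i => 2 * (4 : ℝ) ^ (i : ℕ), ?_, ?_, ?_, ?_, ?_⟩
  · rw [Finset.card_image_of_injective _ fval_injective, Finset.card_univ]
    simp
  · intro i
    have : (0:ℝ) < (4 : ℝ) ^ (i : ℕ) := by positivity
    constructor <;> [positivity; linarith]
  · -- disjointness
    have main : ∀ i j : Fin m, i < j → ∀ x : ℝ,
        ¬(((4:ℝ) ^ (i:ℕ) / 2 < x ∧ x < 2 * 4 ^ (i:ℕ)) ∧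
          ((4:ℝ) ^ (j:ℕ) / 2 < x ∧ x < 2 * 4 ^ (j:ℕ))) := by
      intro i j hij x ⟨⟨_, h1⟩, ⟨h2, _⟩⟩
      have hle : (4:ℝ) ^ ((i:ℕ) + 1) ≤ 4 ^ (j:ℕ) :=
        pow_le_pow_right₀ (by norm_num) (by omega)
      rw [pow_succ] at hle
      linarith
    intro i j hij u _ v _ h
    rcases lt_or_gt_of_ne hij with h' | h'
    · exact main i j h' _ h
    · exact main j i h' _ ⟨h.2, h.1⟩
  · -- coverage
    intro u hu v hv huv
    obtain ⟨c, _, rfl⟩ := Finset.mem_image.1 hu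
    obtain ⟨d, _, rfl⟩ := Finset.mem_image.1 hv
    have hcd : c ≠ d := fun h => huv (by rw [h])
    exact ⟨top c d hcd, dist_bound c d hcd⟩
  · -- counting
    intro p hp S hS hSp
    set L : Finset (Fin m) := (Finset.univ : Finset (Fin m)).filter fun i =>
      ∃ u ∈ S, ∃ v ∈ S, u ≠ v ∧ (4:ℝ) ^ (i:ℕ) / 2 < |u - v| ∧ |u - v| < 2 * 4 ^ (i:ℕ)
      with hL
    set A : Finset (Fin m → Bool) := Finset.univ.filter (fun c => fval c ∈ S) with hA
    have himg : A.image fval = S := by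
      apply Finset.Subset.antisymm
      · intro x hx
        obtain ⟨c, hc, rfl⟩ := Finset.mem_image.1 hx
        exact (Finset.mem_filter.1 hc).2
      · intro x hx
        obtain ⟨c, _, rfl⟩ := Finset.mem_image.1 (hS hx)
        exact Finset.mem_image.2 ⟨c, Finset.mem_filter.2 ⟨Finset.mem_univ _, hx⟩, rfl⟩
    have hAcard : A.card = p := by
      rw [← hSp, ← himg, Finset.card_image_of_injective _ fval_injective]
    have hple : p ≤ 2 ^ L.card := by
      rw [← hAcard]
      apply count_le L.card L rfl A
      intro c hc d hd h
      refine Finset.mem_filter.2 ⟨Finset.mem_univ _, fval c, (Finset.mem_filter.1 hc).2,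
        fval d, (Finset.mem_filter.1 hd).2, ?_, (dist_bound c d h).1, (dist_bound c d h).2⟩
      exact fun hcontra => h (fval_injective hcontra)
    exact (Nat.clog_le_iff_le_pow (by norm_num)).2 hple
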